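/- For all natural numbers k ≤ m, the partial binomial sum ∑_{i=0}^{k} C(m, i) is at most (e·m/k)^k (for k ≥ 1). -/

import Mathlib

/-- For `1 ≤ k ≤ m`, the partial binomial sum `∑_{i=0}^{k} C(m, i)` is at most
`(e·m/k)^k`. -/
theorem partial_binomial_sum_le {m k : ℕ} (hk : 1 ≤ k) (hkm : k ≤ m) :
    (∑ i ∈ Finset.range (k + 1), (m.choose i : ℝ)) ≤
      (Real.exp 1 * m / k) ^ k := by
  have hm : (0:ℝ) < m := by
    have : 1 ≤ m := le_trans hk hkm
    exact_mod_cast Nat.lt_of_lt_of_le Nat.zero_lt_one this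
  have hkR : (0:ℝ) < k := by exact_mod_cast hk
  set x : ℝ := (k:ℝ) / m with hxdef
  have hx0 : 0 < x := div_pos hkR hm
  have hx1 : x ≤ 1 := (div_le_one hm).2 (by exact_mod_cast hkm)
  have hxk : 0 < x ^ k := pow_pos hx0 k
  have step1 : (∑ i ∈ Finset.range (k + 1), (m.choose i : ℝ)) ≤
      (∑ i ∈ Finset.range (k + 1), (m.choose i : ℝ) * x ^ i) / x ^ k := by
    rw [Finset.sum_div]
    apply Finset.sum_le_sum
    intro i hi
    rw [Finset.mem_range, Nat.lt_succ_iff] at hi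
    rw [le_div_iff₀ hxk]
    have : x ^ k ≤ x ^ i := pow_le_pow_of_le_one hx0.le hx1 hi
    exact mul_le_mul_of_nonneg_left this (by positivity)
  have step2 : (∑ i ∈ Finset.range (k + 1), (m.choose i : ℝ) * x ^ i) ≤
      (∑ i ∈ Finset.range (m + 1), (m.choose i : ℝ) * x ^ i) := by
    apply Finset.sum_le_sum_of_subset_of_nonneg
    · exact Finset.range_subset_range.2 (by omega)
    · intro i _ _; positivity
  have step3 : (∑ i ∈ Finset.range (m + 1), (m.choose i : ℝ) * x ^ i) = (1 + x) ^ m := by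
    rw [add_comm 1 x, add_pow]
    apply Finset.sum_congr rfl
    intro i _
    ring
  have step4 : (1 + x) ^ m ≤ Real.exp 1 ^ k := by
    have h1 : (1 + x) ^ m ≤ Real.exp x ^ m := by
      apply pow_le_pow_left₀ (by positivity)
      linarith [Real.add_one_le_exp x]
    have h2 : Real.exp x ^ m = Real.exp ((k:ℝ)) := by
      rw [← Real.exp_nat_mul, hxdef]
      congr 1
      field_simp
    calc (1 + x) ^ m ≤ Real.exp (k:ℝ) := h1.trans_eq h2
      _ = Real.exp 1 ^ k := by rw [← Real.exp_nat_mul]; ring_nf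
  calc (∑ i ∈ Finset.range (k + 1), (m.choose i : ℝ))
      ≤ (∑ i ∈ Finset.range (k + 1), (m.choose i : ℝ) * x ^ i) / x ^ k := step1
    _ ≤ (1 + x) ^ m / x ^ k := by
        gcongr
        exact step2.trans_eq step3
    _ ≤ Real.exp 1 ^ k / x ^ k := by gcongr
    _ = (Real.exp 1 * m / k) ^ k := by
        rw [hxdef, div_pow, div_pow, mul_pow, div_div_eq_mul_div]
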